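/- The image σ(ℂ³) is exactly the set {s ∈ ℝ⁵ : s₅ ≥ max{0, −2s₃, 2s₄} and s₁² + s₂² = s₅(s₅ + 2s₃)(s₅ − 2s₄)}. -/

import Mathlib

/-- The invariant map `σ = (σ₁,…,σ₅) : ℂ³ → ℝ⁵` with `σ₁ + iσ₂ = −conj(z₁z₂z₃)`,
`σ₃ = ½(|z₂|² − |z₃|²)`, `σ₄ = ½(|z₃|² − |z₁|²)`, `σ₅ = |z₃|²`. -/
noncomputable def sigmaMap (z : ℂ × ℂ × ℂ) : Fin 5 → ℝ :=
  ![(-(starRingEnd ℂ) (z.1 * z.2.1 * z.2.2)).re,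
    (-(starRingEnd ℂ) (z.1 * z.2.1 * z.2.2)).im,
    (‖z.2.1‖ ^ 2 - ‖z.2.2‖ ^ 2) / 2,
    (‖z.2.2‖ ^ 2 - ‖z.1‖ ^ 2) / 2,
    ‖z.2.2‖ ^ 2]

/-- The image of `σ` is the semi-algebraic set
`{s ∈ ℝ⁵ : s₅ ≥ max {0, −2s₃, 2s₄}, s₁² + s₂² = s₅(s₅ + 2s₃)(s₅ − 2s₄)}`. -/
theorem sigma_range :
    Set.range sigmaMap =
      {s : Fin 5 → ℝ |
        max 0 (max (-2 * s 2) (2 * s 3)) ≤ s 4 ∧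
        (s 0) ^ 2 + (s 1) ^ 2 = s 4 * (s 4 + 2 * s 2) * (s 4 - 2 * s 3)} := by
  ext s
  constructor
  · rintro ⟨⟨z1, z2, z3⟩, rfl⟩
    set A := ‖z1‖ ^ 2 with hA
    set B := ‖z2‖ ^ 2 with hB
    set C := ‖z3‖ ^ 2 with hC
    have hA0 : 0 ≤ A := sq_nonneg _
    have hB0 : 0 ≤ B := sq_nonneg _
    have hC0 : 0 ≤ C := sq_nonneg _
    have key : ((-(starRingEnd ℂ) (z1 * z2 * z3)).re) ^ 2 +
        ((-(starRingEnd ℂ) (z1 * z2 * z3)).im) ^ 2 = A * B * C := by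
      have h1 : ((-(starRingEnd ℂ) (z1 * z2 * z3)).re) ^ 2 +
          ((-(starRingEnd ℂ) (z1 * z2 * z3)).im) ^ 2 =
          Complex.normSq (-(starRingEnd ℂ) (z1 * z2 * z3)) := by
        rw [Complex.normSq_apply]; ring
      rw [h1, Complex.normSq_neg, Complex.normSq_conj, Complex.normSq_mul,
        Complex.normSq_mul, hA, hB, hC, Complex.sq_norm, Complex.sq_norm,
        Complex.sq_norm]
    simp only [Set.mem_setOf_eq, sigmaMap, Matrix.cons_val_zero, Matrix.cons_val_one,
      Matrix.head_cons, Matrix.cons_val_two, Matrix.tail_cons, Matrix.cons_val_three,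
      Matrix.cons_val_four]
    refine ⟨?_, ?_⟩
    · simp only [max_le_iff]
      refine ⟨hC0, by linarith, by linarith⟩
    · rw [key]; ring
  · rintro ⟨h1, h2⟩
    simp only [max_le_iff] at h1
    obtain ⟨hc0, hb0', ha0'⟩ := h1
    set a := s 4 - 2 * s 3 with ha
    set b := s 4 + 2 * s 2 with hb
    have ha0 : 0 ≤ a := by simp only [ha]; linarith
    have hb0 : 0 ≤ b := by simp only [hb]; linarith
    have haA : ‖((Real.sqrt a : ℝ) : ℂ)‖ ^ 2 = a := by
      rw [Complex.sq_norm, Complex.normSq_ofReal, Real.mul_self_sqrt ha0]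
    have haB : ‖((Real.sqrt b : ℝ) : ℂ)‖ ^ 2 = b := by
      rw [Complex.sq_norm, Complex.normSq_ofReal, Real.mul_self_sqrt hb0]
    by_cases hab : a * b = 0
    · -- degenerate case: s 0 = s 1 = 0
      have habc : s 4 * (s 4 + 2 * s 2) * (s 4 - 2 * s 3) = 0 := by
        rcases mul_eq_zero.mp hab with h | h
        · rw [ha] at h; rw [h]; ring
        · rw [hb] at h; rw [h]; ring
      have hsum : s 0 ^ 2 + s 1 ^ 2 = 0 := by rw [h2, habc]
      have hs0 : s 0 = 0 := by nlinarith [sq_nonneg (s 0), sq_nonneg (s 1)]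
      have hs1 : s 1 = 0 := by nlinarith [sq_nonneg (s 0), sq_nonneg (s 1)]
      refine ⟨((Real.sqrt a : ℝ), (Real.sqrt b : ℝ), (Real.sqrt (s 4) : ℝ)), ?_⟩
      have hprod : ((Real.sqrt a : ℂ) * (Real.sqrt b : ℂ) * (Real.sqrt (s 4) : ℂ)) = 0 := by
        have h0 : Real.sqrt a * Real.sqrt b = 0 := by
          rcases mul_eq_zero.mp hab with h | h <;> simp [h]
        rw [← Complex.ofReal_mul, ← Complex.ofReal_mul, h0, zero_mul,
          Complex.ofReal_zero]
      have haC : ‖((Real.sqrt (s 4) : ℝ) : ℂ)‖ ^ 2 = s 4 := by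
        rw [Complex.sq_norm, Complex.normSq_ofReal, Real.mul_self_sqrt hc0]
      funext i
      fin_cases i
      · simp only [sigmaMap, Matrix.cons_val_zero, hprod, map_zero, neg_zero,
          Complex.zero_re]
        exact hs0.symm
      · simp only [sigmaMap, Matrix.cons_val_one, Matrix.head_cons, hprod, map_zero,
          neg_zero, Complex.zero_im]
        exact hs1.symm
      · show (‖((Real.sqrt b : ℝ) : ℂ)‖ ^ 2
            - ‖((Real.sqrt (s 4) : ℝ) : ℂ)‖ ^ 2) / 2 = s 2
        rw [haB, haC, hb]; ring
      · show (‖((Real.sqrt (s 4) : ℝ) : ℂ)‖ ^ 2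
            - ‖((Real.sqrt a : ℝ) : ℂ)‖ ^ 2) / 2 = s 3
        rw [haA, haC, ha]; ring
      · show ‖((Real.sqrt (s 4) : ℝ) : ℂ)‖ ^ 2 = s 4
        exact haC
    · have ha' : 0 < a := lt_of_le_of_ne ha0 fun h => hab (by rw [← h]; ring)
      have hb' : 0 < b := lt_of_le_of_ne hb0 fun h => hab (by rw [← h]; ring)
      set p : ℂ := ⟨-s 0, s 1⟩ with hp
      have hnp : Complex.normSq p = s 4 * b * a := by
        rw [hp, Complex.normSq_mk, ← hb, ← ha] at *
        rw [← h2]; ring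
      set w : ℂ := ((Real.sqrt a : ℝ) : ℂ) * ((Real.sqrt b : ℝ) : ℂ) with hw
      have hw0 : w ≠ 0 := by
        rw [hw]
        exact mul_ne_zero
          (by simpa using (Real.sqrt_ne_zero'.mpr ha'))
          (by simpa using (Real.sqrt_ne_zero'.mpr hb'))
      set z3 : ℂ := p / w with hz3
      have hnw : Complex.normSq w = a * b := by
        rw [hw, ← Complex.ofReal_mul, Complex.normSq_ofReal, ← Real.sqrt_mul ha0,
          Real.mul_self_sqrt (mul_nonneg ha0 hb0)]
      have habsz3 : ‖z3‖ ^ 2 = s 4 := by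
        rw [hz3, Complex.sq_norm, Complex.normSq_div, hnp, hnw]
        field_simp
      have hprod : ((Real.sqrt a : ℂ) * (Real.sqrt b : ℂ) * z3) = p := by
        rw [hz3, ← hw, mul_div_cancel₀ _ hw0]
      have hconj : (-(starRingEnd ℂ) (((Real.sqrt a : ℝ) : ℂ) * ((Real.sqrt b : ℝ) : ℂ) * z3)) = ⟨s 0, s 1⟩ := by
        rw [hprod, hp]
        apply Complex.ext <;> simp
      refine ⟨((Real.sqrt a : ℝ), (Real.sqrt b : ℝ), z3), ?_⟩
      funext i
      fin_cases i
      · show (-(starRingEnd ℂ) (((Real.sqrt a : ℝ) : ℂ) * ((Real.sqrt b : ℝ) : ℂ) * z3)).re = s 0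
        rw [hconj]
      · show (-(starRingEnd ℂ) (((Real.sqrt a : ℝ) : ℂ) * ((Real.sqrt b : ℝ) : ℂ) * z3)).im = s 1
        rw [hconj]
      · show (‖((Real.sqrt b : ℝ) : ℂ)‖ ^ 2 - ‖z3‖ ^ 2) / 2 = s 2
        rw [haB, habsz3, hb]; ring
      · show (‖z3‖ ^ 2 - ‖((Real.sqrt a : ℝ) : ℂ)‖ ^ 2) / 2 = s 3
        rw [haA, habsz3, ha]; ring
      · show ‖z3‖ ^ 2 = s 4
        exact habsz3
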